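/- For every i ≥ 1, the optimal worst-case number of queries for the Regression Search Problem on the i-th Fibonacci tree F_i is exactly i − 1. -/

import Mathlib

/-- A strategy is a binary decision tree: internal nodes are queried vertices,
leaves identify the faulty vertex. -/
inductive Strategy (V : Type) : Type where
  | leaf : V → Strategy V
  | node : V → Strategy V → Strategy V → Strategy V

namespace Strategy

/-- The worst-case number of queries of a strategy is the height of the tree. -/
def height {V : Type} : Strategy V → ℕ
  | leaf _ => 0
  | node _ l r => 1 + max l.height r.height

open Classical in
/-- Running a strategy: `anc u v` means `u` is an ancestor of `v` (including `u = v`).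
A query of `q` answers "bugged" (left subtree) iff the faulty vertex `f` is an ancestor
of `q`, and "clean" (right subtree) otherwise. The result is the vertex identified at
the reached leaf. -/
noncomputable def run {V : Type} (anc : V → V → Prop) : Strategy V → V → V
  | leaf v, _ => v
  | node q l r, f => if anc f q then run anc l f else run anc r f

end Strategy


/-- Shapes of rooted in-trees: a single vertex, a sink with one parent subtree, or a
sink with two parent subtrees. -/
inductive ITree : Type where
  | leaf : ITree
  | node1 : ITree → ITree
  | node2 : ITree → ITree → ITree

/-- The vertices of an in-tree shape. -/
def Pos : ITree → Type
  | .leaf => PUnit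
  | .node1 t => Pos t ⊕ PUnit
  | .node2 t s => (Pos t ⊕ Pos s) ⊕ PUnit

def posFintype : ∀ t : ITree, Fintype (Pos t)
  | .leaf => inferInstanceAs (Fintype PUnit)
  | .node1 t =>
      letI := posFintype t
      inferInstanceAs (Fintype (Pos t ⊕ PUnit))
  | .node2 t s =>
      letI := posFintype t
      letI := posFintype s
      inferInstanceAs (Fintype ((Pos t ⊕ Pos s) ⊕ PUnit))

attribute [instance] posFintype

/-- The sink (root) of an in-tree. -/
def sinkOf : ∀ t : ITree, Pos t
  | .leaf => PUnit.unit
  | .node1 _ => Sum.inr PUnit.unit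
  | .node2 _ _ => Sum.inr PUnit.unit

/-- The arcs of an in-tree: all arcs are directed towards the sink. -/
def edgeOf : ∀ t : ITree, Pos t → Pos t → Prop
  | .node1 t, .inl a, .inl b => edgeOf t a b
  | .node1 t, .inl a, .inr _ => a = sinkOf t
  | .node2 t _, .inl (.inl a), .inl (.inl b) => edgeOf t a b
  | .node2 _ s, .inl (.inr a), .inl (.inr b) => edgeOf s a b
  | .node2 t _, .inl (.inl a), .inr _ => a = sinkOf t
  | .node2 _ s, .inl (.inr a), .inr _ => a = sinkOf s
  | _, _, _ => False

/-- The `i`-th Fibonacci tree `F_i` (indices `i ≥ 1`; `FibTree 0` is a dummy value):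
`F₁` is a single vertex, `F₂` is a single arc, and `F_{i+1}` is a sink whose two parents
are the sinks of disjoint copies of `F_i` and `F_{i-1}`. -/
def FibTree : ℕ → ITree
  | 0 => .leaf
  | 1 => .leaf
  | 2 => .node1 .leaf
  | (n + 3) => .node2 (FibTree (n + 2)) (FibTree (n + 1))


/-! ### Auxiliary development -/

section LowerBoundAbstract

variable {V : Type} (anc : V → V → Prop)

/-- `Rk anc k S v` : the candidate set `S` contains a pattern of the Fibonacci tree
`F_{k+1}` whose sink lies (weakly) above `v`.  It forces any correct strategy to use
at least `k` queries. -/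
def Rk : ℕ → Set V → V → Prop
  | 0, S, v => ∃ u, u ∈ S ∧ anc u v
  | 1, S, v => ∃ u₁ u₂, u₁ ≠ u₂ ∧ u₁ ∈ S ∧ u₂ ∈ S ∧ anc u₁ v ∧ anc u₂ v
  | (k+2), S, v => ∃ a b, anc a v ∧ anc b v ∧ ¬ anc a b ∧ ¬ anc b a ∧
      Rk (k+1) S a ∧ Rk k S b

variable {anc}

lemma rk_root (htr : ∀ x y z : V, anc x y → anc y z → anc x z)
    {k : ℕ} {S : Set V} {a v : V} (h : Rk anc k S a) (hav : anc a v) :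
    Rk anc k S v := by
  match k with
  | 0 =>
    obtain ⟨u, hu, hua⟩ := h
    exact ⟨u, hu,  htr _ _ _ hua hav⟩
  | 1 =>
    obtain ⟨u₁, u₂, hne, h1, h2, g1, g2⟩ := h
    exact ⟨u₁, u₂, hne, h1, h2,  htr _ _ _ g1 hav,  htr _ _ _ g2 hav⟩
  | (k+2) =>
    obtain ⟨a', b', g1, g2, n1, n2, p1, p2⟩ := h
    exact ⟨a', b',  htr _ _ _ g1 hav,  htr _ _ _ g2 hav, n1, n2, p1, p2⟩

lemma rk_mono (htr : ∀ x y z : V, anc x y → anc y z → anc x z) :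
    ∀ (k : ℕ) {S S' : Set V} {v : V}, Rk anc k S v →
      (∀ u, u ∈ S → anc u v → u ∈ S') → Rk anc k S' v
  | 0, S, S', v, h, H => by
      obtain ⟨u, hu, hua⟩ := h
      exact ⟨u, H u hu hua, hua⟩
  | 1, S, S', v, h, H => by
      obtain ⟨u₁, u₂, hne, h1, h2, g1, g2⟩ := h
      exact ⟨u₁, u₂, hne, H u₁ h1 g1, H u₂ h2 g2, g1, g2⟩
  | (k+2), S, S', v, h, H => by
      obtain ⟨a, b, gav, gbv, n1, n2, p1, p2⟩ := h
      exact ⟨a, b, gav, gbv, n1, n2,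
        rk_mono htr (k+1) p1 (fun u hu hua => H u hu ( htr _ _ _ hua gav)),
        rk_mono htr k p2 (fun u hu hub => H u hu ( htr _ _ _ hub gbv))⟩

lemma rk_down (htr : ∀ x y z : V, anc x y → anc y z → anc x z) :
    ∀ (k : ℕ) {S : Set V} {v : V}, Rk anc (k+1) S v → Rk anc k S v
  | 0, S, v, h => by
      obtain ⟨u₁, u₂, _, h1, _, g1, _⟩ := h
      exact ⟨u₁, h1, g1⟩
  | 1, S, v, h => by
      obtain ⟨a, b, gav, _, _, _, p1, _⟩ := h
      exact rk_root htr p1 gav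
  | (k+2), S, v, h => by
      obtain ⟨a, b, gav, gbv, n1, n2, p1, p2⟩ := h
      exact ⟨a, b, gav, gbv, n1, n2, rk_down htr (k+1) p1, rk_down htr k p2⟩

lemma rk_to_one (htr : ∀ x y z : V, anc x y → anc y z → anc x z) :
    ∀ (k : ℕ) {S : Set V} {v : V}, Rk anc (k+1) S v → Rk anc 1 S v
  | 0, S, v, h => h
  | (k+1), S, v, h => rk_to_one htr k (rk_down htr (k+1) h)

lemma rk_pair (htr : ∀ x y z : V, anc x y → anc y z → anc x z)
    (hch : ∀ u a b : V, anc u a → anc u b → anc a b ∨ anc b a)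
    (j : ℕ) {C : Set V} {a b v : V}
    (pa : Rk anc j C a) (pb : Rk anc j C b)
    (nab : ¬ anc a b) (nba : ¬ anc b a) (gav : anc a v) (gbv : anc b v) :
    Rk anc (j+1) C v := by
  match j with
  | 0 =>
    obtain ⟨u₁, hu1, g1⟩ := pa
    obtain ⟨u₂, hu2, g2⟩ := pb
    refine ⟨u₁, u₂, ?_, hu1, hu2,  htr _ _ _ g1 gav,  htr _ _ _ g2 gbv⟩
    rintro rfl
    rcases hch _ _ _ g1 g2 with h | h
    · exact nab h
    · exact nba h
  | (j+1) =>
    exact ⟨a, b, gav, gbv, nab, nba, pa, rk_down htr j pb⟩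

lemma rk_split (htr : ∀ x y z : V, anc x y → anc y z → anc x z)
    (hch : ∀ u a b : V, anc u a → anc u b → anc a b ∨ anc b a) :
    ∀ (k : ℕ) (S : Set V) (v q : V), Rk anc k S v →
      Rk anc k {x | x ∈ S ∧ anc x q} q ∨
      Rk anc (k-1) {x | x ∈ S ∧ ¬ anc x q} v ∨
      (Rk anc (k-1) {x | x ∈ S ∧ anc x q} q ∧ Rk anc (k-2) {x | x ∈ S ∧ ¬ anc x q} v)
  | 0, S, v, q, h => by
      obtain ⟨u, hu, huv⟩ := h
      by_cases hq : anc u q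
      · exact Or.inl ⟨u, ⟨hu, hq⟩, hq⟩
      · exact Or.inr (Or.inl ⟨u, ⟨hu, hq⟩, huv⟩)
  | 1, S, v, q, h => by
      obtain ⟨u₁, u₂, hne, h1, h2, g1, g2⟩ := h
      by_cases hq1 : anc u₁ q <;> by_cases hq2 : anc u₂ q
      · exact Or.inl ⟨u₁, u₂, hne, ⟨h1, hq1⟩, ⟨h2, hq2⟩, hq1, hq2⟩
      · exact Or.inr (Or.inr ⟨⟨u₁, ⟨h1, hq1⟩, hq1⟩, ⟨u₂, ⟨h2, hq2⟩, g2⟩⟩)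
      · exact Or.inr (Or.inr ⟨⟨u₂, ⟨h2, hq2⟩, hq2⟩, ⟨u₁, ⟨h1, hq1⟩, g1⟩⟩)
      · exact Or.inr (Or.inl ⟨u₁, ⟨h1, hq1⟩, g1⟩)
  | (k+2), S, v, q, h => by
      obtain ⟨a, b, gav, gbv, nab, nba, pa, pb⟩ := h
      -- B := {x ∈ S | anc x q}, C := {x ∈ S | ¬ anc x q}
      by_cases Haq : anc a q
      · by_cases Hbq : anc b q
        · -- q below both patterns : everything goes to the bugged side
          refine Or.inl ⟨a, b, Haq, Hbq, nab, nba, ?_, ?_⟩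
          · exact rk_mono htr (k+1) pa (fun u hu hua => ⟨hu,  htr _ _ _ hua Haq⟩)
          · exact rk_mono htr k pb (fun u hu hub => ⟨hu,  htr _ _ _ hub Hbq⟩)
        · -- q below a only; b-pattern fully clean
          have hqb : ¬ anc q b := fun h' => nab (htr _ _ _ Haq h')
          have pbC : Rk anc k {x | x ∈ S ∧ ¬ anc x q} b :=
            rk_mono htr k pb (fun u hu hub => ⟨hu, fun huq => by
              rcases hch _ _ _ hub huq with h' | h'
              · exact Hbq h'
              · exact hqb h'⟩)
          have paB : Rk anc (k+1) {x | x ∈ S ∧ anc x q} q :=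
            rk_root htr
              (rk_mono htr (k+1) pa (fun u hu hua => ⟨hu,  htr _ _ _ hua Haq⟩)) Haq
          exact Or.inr (Or.inr ⟨paB, rk_root htr pbC gbv⟩)
      · by_cases Hbq : anc b q
        · -- q below b only; a-pattern fully clean
          have hqa : ¬ anc q a := fun h' => nba (htr _ _ _ Hbq h')
          have paC : Rk anc (k+1) {x | x ∈ S ∧ ¬ anc x q} a :=
            rk_mono htr (k+1) pa (fun u hu hua => ⟨hu, fun huq => by
              rcases hch _ _ _ hua huq with h' | h'
              · exact Haq h'
              · exact hqa h'⟩)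
          exact Or.inr (Or.inl (rk_root htr paC gav))
        · by_cases Hqa : anc q a
          · -- q strictly above a : split the a-pattern
            have hqb : ¬ anc q b := fun h' => by
              rcases hch _ _ _ Hqa h' with h'' | h''
              · exact nab h''
              · exact nba h''
            have pbC : Rk anc k {x | x ∈ S ∧ ¬ anc x q} b :=
              rk_mono htr k pb (fun u hu hub => ⟨hu, fun huq => by
                rcases hch _ _ _ hub huq with h' | h'
                · exact Hbq h'
                · exact hqb h'⟩)
            rcases rk_split htr hch (k+1) S a q pa with h1 | h2 | ⟨h3a, h3b⟩
            · exact Or.inr (Or.inr ⟨h1, rk_root htr pbC gbv⟩)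
            · -- h2 : Rk k C a ; combine with pbC at roots b, a
              refine Or.inr (Or.inl ?_)
              exact rk_pair htr hch k h2 pbC nab nba gav gbv
            · -- h3b : Rk (k-1) C a ; combine ⟨b @ k, a @ (k-1)⟩
              refine Or.inr (Or.inl ?_)
              match k, pbC, h3b with
              | 0, pbC, h3b =>
                  obtain ⟨u₁, hu1, g1⟩ := pbC
                  obtain ⟨u₂, hu2, g2⟩ := h3b
                  refine ⟨u₁, u₂, ?_, hu1, hu2,  htr _ _ _ g1 gbv,  htr _ _ _ g2 gav⟩
                  rintro rfl
                  rcases hch _ _ _ g1 g2 with h' | h'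
                  · exact nba h'
                  · exact nab h'
              | (k+1), pbC, h3b =>
                  exact ⟨b, a, gbv, gav, nba, nab, pbC, h3b⟩
          · by_cases Hqb : anc q b
            · -- q strictly above b : a-pattern fully clean
              have paC : Rk anc (k+1) {x | x ∈ S ∧ ¬ anc x q} a :=
                rk_mono htr (k+1) pa (fun u hu hua => ⟨hu, fun huq => by
                  rcases hch _ _ _ hua huq with h' | h'
                  · exact Haq h'
                  · exact Hqa h'⟩)
              exact Or.inr (Or.inl (rk_root htr paC gav))
            · -- q incomparable with both: everything clean
              have paC : Rk anc (k+1) {x | x ∈ S ∧ ¬ anc x q} a :=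
                rk_mono htr (k+1) pa (fun u hu hua => ⟨hu, fun huq => by
                  rcases hch _ _ _ hua huq with h' | h'
                  · exact Haq h'
                  · exact Hqa h'⟩)
              have pbC : Rk anc k {x | x ∈ S ∧ ¬ anc x q} b :=
                rk_mono htr k pb (fun u hu hub => ⟨hu, fun huq => by
                  rcases hch _ _ _ hub huq with h' | h'
                  · exact Hbq h'
                  · exact Hqb h'⟩)
              exact Or.inr (Or.inl
                (rk_down htr (k+1) ⟨a, b, gav, gbv, nab, nba, paC, pbC⟩))

/-- The abstract lower bound: a pattern of level `k` forces height `≥ k`. -/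
lemma rk_lower (htr : ∀ x y z : V, anc x y → anc y z → anc x z)
    (hch : ∀ u a b : V, anc u a → anc u b → anc a b ∨ anc b a) :
    ∀ (s : Strategy V) (S : Set V), (∀ f ∈ S, s.run anc f = f) →
      ∀ (k : ℕ) (v : V), Rk anc k S v → k ≤ s.height := by
  intro s
  induction s with
  | leaf w =>
      intro S hc k v hr
      match k, hr with
      | 0, _ => exact Nat.zero_le _
      | (k+1), hr =>
          obtain ⟨u₁, u₂, hne, h1, h2, _, _⟩ := rk_to_one htr k hr
          have e1 : u₁ = w := (hc u₁ h1).symm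
          have e2 : u₂ = w := (hc u₂ h2).symm
          exact absurd (e1.trans e2.symm) hne
  | node q l r ihl ihr =>
      intro S hc k v hr
      match k, hr with
      | 0, _ => exact Nat.zero_le _
      | (k+1), hr =>
          have hl : ∀ f ∈ {x | x ∈ S ∧ anc x q}, l.run anc f = f := by
            rintro f ⟨hfS, hfq⟩
            have := hc f hfS
            simp only [Strategy.run] at this
            rwa [if_pos hfq] at this
          have hrr : ∀ f ∈ {x | x ∈ S ∧ ¬ anc x q}, r.run anc f = f := by
            rintro f ⟨hfS, hfq⟩
            have := hc f hfS
            simp only [Strategy.run] at this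
            rwa [if_neg hfq] at this
          have hmaxl : l.height ≤ max l.height r.height := le_max_left _ _
          have hmaxr : r.height ≤ max l.height r.height := le_max_right _ _
          rcases rk_split htr hch (k+1) S v q hr with h1 | h2 | ⟨h3, _⟩
          · have := ihl _ hl (k+1) q h1
            simp only [Strategy.height]
            omega
          · have := ihr _ hrr k v h2
            simp only [Strategy.height]
            omega
          · have := ihl _ hl k q h3
            simp only [Strategy.height]
            omega

end LowerBoundAbstract

/-! ### Structural lemmas about in-trees -/

/-- Ancestor relation of an in-tree. -/
def ancT (t : ITree) : Pos t → Pos t → Prop :=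
  Relation.ReflTransGen (edgeOf t)

lemma ancT_trans {t : ITree} {x y z : Pos t} (h1 : ancT t x y) (h2 : ancT t y z) :
    ancT t x z := Relation.ReflTransGen.trans h1 h2

lemma sink_no_edge : ∀ (t : ITree) (w : Pos t), ¬ edgeOf t (sinkOf t) w
  | .leaf, w, h => h
  | .node1 t, w, h => by
      rcases w with a | u
      · exact h
      · exact h
  | .node2 t s, w, h => by
      rcases w with (a | b) | u
      · exact h
      · exact h
      · exact h

lemma edge_det : ∀ (t : ITree) (u v w : Pos t),
    edgeOf t u v → edgeOf t u w → v = w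
  | .leaf, u, v, w, h1, _ => False.elim h1
  | .node1 t, u, v, w, h1, h2 => by
      rcases u with a | pu
      · rcases v with b | pv <;> rcases w with c | pw
        · exact congrArg Sum.inl (edge_det t a b c h1 h2)
        · cases h2; exact absurd h1 (sink_no_edge t b)
        · cases h1; exact absurd h2 (sink_no_edge t c)
        · cases pv; cases pw; rfl
      · rcases v with b | pv
        · exact False.elim h1
        · exact False.elim h1
  | .node2 t s, u, v, w, h1, h2 => by
      rcases u with (a | a) | pu
      · rcases v with (b | b) | pv <;> rcases w with (c | c) | pw
        · exact congrArg (Sum.inl ∘ Sum.inl) (edge_det t a b c h1 h2)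
        · exact False.elim h2
        · cases h2; exact absurd h1 (sink_no_edge t b)
        · exact False.elim h1
        · exact False.elim h1
        · exact False.elim h1
        · cases h1; exact absurd h2 (sink_no_edge t c)
        · exact False.elim h2
        · cases pv; cases pw; rfl
      · rcases v with (b | b) | pv <;> rcases w with (c | c) | pw
        · exact False.elim h1
        · exact False.elim h1
        · exact False.elim h1
        · exact False.elim h2
        · exact congrArg (Sum.inl ∘ Sum.inr) (edge_det s a b c h1 h2)
        · cases h2; exact absurd h1 (sink_no_edge s b)
        · exact False.elim h2
        · cases h1; exact absurd h2 (sink_no_edge s c)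
        · cases pv; cases pw; rfl
      · rcases v with (b | b) | pv
        · exact False.elim h1
        · exact False.elim h1
        · exact False.elim h1

lemma ancT_chain {t : ITree} :
    ∀ {u a b : Pos t}, ancT t u a → ancT t u b → ancT t a b ∨ ancT t b a := by
  intro u a b h1
  induction h1 using Relation.ReflTransGen.head_induction_on with
  | refl => exact fun h2 => Or.inl h2
  | @head x c e hca ih =>
      intro h2
      rcases Relation.ReflTransGen.cases_head h2 with rfl | ⟨c', e', hc'b⟩
      · exact Or.inr (Relation.ReflTransGen.head e hca)
      · obtain rfl := edge_det _ _ _ _ e e'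
        exact ih hc'b

/-! ### Lifting along subtree embeddings -/

lemma lift_n1 {t : ITree} {u v : Pos t} (h : ancT t u v) :
    ancT (.node1 t) (Sum.inl u) (Sum.inl v) := by
  induction h with
  | refl => exact Relation.ReflTransGen.refl
  | tail _ e ih => exact Relation.ReflTransGen.tail ih e

lemma lift_n2L {t s : ITree} {u v : Pos t} (h : ancT t u v) :
    ancT (.node2 t s) (Sum.inl (Sum.inl u)) (Sum.inl (Sum.inl v)) := by
  induction h with
  | refl => exact Relation.ReflTransGen.refl
  | tail _ e ih => exact Relation.ReflTransGen.tail ih e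

lemma lift_n2R {t s : ITree} {u v : Pos s} (h : ancT s u v) :
    ancT (.node2 t s) (Sum.inl (Sum.inr u)) (Sum.inl (Sum.inr v)) := by
  induction h with
  | refl => exact Relation.ReflTransGen.refl
  | tail _ e ih => exact Relation.ReflTransGen.tail ih e

lemma all_anc_sink : ∀ (t : ITree) (x : Pos t), ancT t x (sinkOf t)
  | .leaf, x => by cases x; exact Relation.ReflTransGen.refl
  | .node1 t, x => by
      rcases x with a | pu
      · refine Relation.ReflTransGen.tail (lift_n1 (all_anc_sink t a)) ?_
        show sinkOf t = sinkOf t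
        rfl
      · cases pu; exact Relation.ReflTransGen.refl
  | .node2 t s, x => by
      rcases x with (a | b) | pu
      · refine Relation.ReflTransGen.tail (lift_n2L (all_anc_sink t a)) ?_
        show sinkOf t = sinkOf t
        rfl
      · refine Relation.ReflTransGen.tail (lift_n2R (all_anc_sink s b)) ?_
        show sinkOf s = sinkOf s
        rfl
      · cases pu; exact Relation.ReflTransGen.refl

lemma reach_n2L {t s : ITree} {u : Pos t} {w : Pos (.node2 t s)}
    (h : ancT (.node2 t s) (Sum.inl (Sum.inl u)) w) :
    (∃ v, w = Sum.inl (Sum.inl v) ∧ ancT t u v) ∨ w = Sum.inr PUnit.unit := by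
  induction h with
  | refl => exact Or.inl ⟨u, rfl, Relation.ReflTransGen.refl⟩
  | @tail mid last hmid e ih =>
      rcases ih with ⟨v, rfl, hv⟩ | rfl
      · rcases last with (v' | v') | pw
        · exact Or.inl ⟨v', rfl, Relation.ReflTransGen.tail hv e⟩
        · exact False.elim e
        · cases pw; exact Or.inr rfl
      · rcases last with (v' | v') | pw
        · exact False.elim e
        · exact False.elim e
        · exact False.elim e

lemma reach_n2R {t s : ITree} {u : Pos s} {w : Pos (.node2 t s)}
    (h : ancT (.node2 t s) (Sum.inl (Sum.inr u)) w) :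
    (∃ v, w = Sum.inl (Sum.inr v) ∧ ancT s u v) ∨ w = Sum.inr PUnit.unit := by
  induction h with
  | refl => exact Or.inl ⟨u, rfl, Relation.ReflTransGen.refl⟩
  | @tail mid last hmid e ih =>
      rcases ih with ⟨v, rfl, hv⟩ | rfl
      · rcases last with (v' | v') | pw
        · exact False.elim e
        · exact Or.inl ⟨v', rfl, Relation.ReflTransGen.tail hv e⟩
        · cases pw; exact Or.inr rfl
      · rcases last with (v' | v') | pw
        · exact False.elim e
        · exact False.elim e
        · exact False.elim e

lemma reach_sink_n2 {t s : ITree} {pu : PUnit} {w : Pos (.node2 t s)}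
    (h : ancT (.node2 t s) (Sum.inr pu) w) : w = Sum.inr PUnit.unit := by
  induction h with
  | refl => cases pu; rfl
  | @tail mid last hmid e ih =>
      subst ih
      rcases last with (v' | v') | pw
      · exact False.elim e
      · exact False.elim e
      · exact False.elim e

lemma reach_sink_n1 {t : ITree} {pu : PUnit} {w : Pos (.node1 t)}
    (h : ancT (.node1 t) (Sum.inr pu) w) : w = Sum.inr PUnit.unit := by
  induction h with
  | refl => cases pu; rfl
  | @tail mid last hmid e ih =>
      subst ih
      rcases last with v' | pw
      · exact False.elim e
      · exact False.elim e

lemma anc_n2L_iff {t s : ITree} {u v : Pos t} :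
    ancT (.node2 t s) (Sum.inl (Sum.inl u)) (Sum.inl (Sum.inl v)) ↔ ancT t u v := by
  constructor
  · intro h
    rcases reach_n2L h with ⟨v', hv', hanc⟩ | h'
    · obtain rfl : v = v' := by
        injection hv' with h1
        injection h1
      exact hanc
    · exact absurd h' (by simp)
  · exact lift_n2L

lemma anc_n2R_iff {t s : ITree} {u v : Pos s} :
    ancT (.node2 t s) (Sum.inl (Sum.inr u)) (Sum.inl (Sum.inr v)) ↔ ancT s u v := by
  constructor
  · intro h
    rcases reach_n2R h with ⟨v', hv', hanc⟩ | h'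
    · obtain rfl : v = v' := by
        injection hv' with h1
        injection h1
      exact hanc
    · exact absurd h' (by simp)
  · exact lift_n2R

lemma not_anc_n2LR {t s : ITree} {u : Pos t} {v : Pos s} :
    ¬ ancT (.node2 t s) (Sum.inl (Sum.inl u)) (Sum.inl (Sum.inr v)) := by
  intro h
  rcases reach_n2L h with ⟨v', hv', _⟩ | h'
  · injection hv' with h1; injection h1
  · injection h'

lemma not_anc_n2RL {t s : ITree} {u : Pos s} {v : Pos t} :
    ¬ ancT (.node2 t s) (Sum.inl (Sum.inr u)) (Sum.inl (Sum.inl v)) := by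
  intro h
  rcases reach_n2R h with ⟨v', hv', _⟩ | h'
  · injection hv' with h1; injection h1
  · injection h'

/-! ### Mapping strategies along embeddings -/

def smap {V W : Type} (e : V → W) : Strategy V → Strategy W
  | .leaf v => .leaf (e v)
  | .node q l r => .node (e q) (smap e l) (smap e r)

lemma smap_height {V W : Type} (e : V → W) :
    ∀ s : Strategy V, (smap e s).height = s.height
  | .leaf v => rfl
  | .node q l r => by
      simp only [smap, Strategy.height, smap_height e l, smap_height e r]

lemma smap_run {V W : Type} {ancV : V → V → Prop} {ancW : W → W → Prop}
    (e : V → W) (he : ∀ u v, ancW (e u) (e v) ↔ ancV u v) :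
    ∀ (s : Strategy V) (a : V),
      (smap e s).run ancW (e a) = e (s.run ancV a)
  | .leaf v, a => rfl
  | .node q l r, a => by
      simp only [smap, Strategy.run]
      by_cases h : ancV a q
      · rw [if_pos ((he a q).mpr h), if_pos h]
        exact smap_run e he l a
      · rw [if_neg (fun h' => h ((he a q).mp h')), if_neg h]
        exact smap_run e he r a

lemma rk_transfer {V W : Type} {ancV : V → V → Prop} {ancW : W → W → Prop}
    (e : V → W) (he : ∀ u v, ancW (e u) (e v) ↔ ancV u v)
    (hinj : Function.Injective e) :
    ∀ (k : ℕ) {v : V}, Rk ancV k Set.univ v → Rk ancW k Set.univ (e v)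
  | 0, v, h => by
      obtain ⟨u, _, hua⟩ := h
      exact ⟨e u, trivial, (he u v).mpr hua⟩
  | 1, v, h => by
      obtain ⟨u₁, u₂, hne, _, _, g1, g2⟩ := h
      exact ⟨e u₁, e u₂, fun h' => hne (hinj h'), trivial, trivial,
        (he u₁ v).mpr g1, (he u₂ v).mpr g2⟩
  | (k+2), v, h => by
      obtain ⟨a, b, gav, gbv, nab, nba, p1, p2⟩ := h
      exact ⟨e a, e b, (he a v).mpr gav, (he b v).mpr gbv,
        fun h' => nab ((he a b).mp h'), fun h' => nba ((he b a).mp h'),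
        rk_transfer e he hinj (k+1) p1, rk_transfer e he hinj k p2⟩

/-! ### The Fibonacci pattern and the optimal strategy -/

lemma rk_fib : ∀ n : ℕ,
    Rk (ancT (FibTree (n+1))) n Set.univ (sinkOf (FibTree (n+1)))
  | 0 => ⟨PUnit.unit, trivial, Relation.ReflTransGen.refl⟩
  | 1 => by
      refine ⟨Sum.inl PUnit.unit, Sum.inr PUnit.unit, Sum.inl_ne_inr, trivial, trivial, ?_, ?_⟩
      · exact Relation.ReflTransGen.single rfl
      · exact Relation.ReflTransGen.refl
  | (m+2) => by
      show Rk (ancT (.node2 (FibTree (m+2)) (FibTree (m+1)))) (m+2) Set.univ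
        (Sum.inr PUnit.unit)
      refine ⟨Sum.inl (Sum.inl (sinkOf (FibTree (m+2)))),
              Sum.inl (Sum.inr (sinkOf (FibTree (m+1)))), ?_, ?_,
              not_anc_n2LR, not_anc_n2RL, ?_, ?_⟩
      · exact Relation.ReflTransGen.single rfl
      · exact Relation.ReflTransGen.single rfl
      · exact rk_transfer
          (fun a => (Sum.inl (Sum.inl a) : Pos (.node2 (FibTree (m+2)) (FibTree (m+1)))))
          (fun u v => anc_n2L_iff) (fun a b h => by injection h with h1; injection h1)
          (m+1) (rk_fib (m+1))
      · exact rk_transfer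
          (fun b => (Sum.inl (Sum.inr b) : Pos (.node2 (FibTree (m+2)) (FibTree (m+1)))))
          (fun u v => anc_n2R_iff) (fun a b h => by injection h with h1; injection h1)
          m (rk_fib m)

lemma ub_fib : ∀ n : ℕ, ∃ s : Strategy (Pos (FibTree (n+1))),
    (∀ f, s.run (ancT (FibTree (n+1))) f = f) ∧ s.height ≤ n
  | 0 => by
      refine ⟨.leaf PUnit.unit, fun f => ?_, Nat.le_refl _⟩
      cases f; rfl
  | 1 => by
      refine ⟨.node (Sum.inl PUnit.unit) (.leaf (Sum.inl PUnit.unit))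
        (.leaf (Sum.inr PUnit.unit)), fun f => ?_, Nat.le_refl _⟩
      rcases f with pu | pu <;> cases pu
      · have hp : ancT (FibTree (1+1)) (Sum.inl PUnit.unit) (Sum.inl PUnit.unit) :=
          Relation.ReflTransGen.refl
        simp only [Strategy.run]
        exact if_pos hp
      · have hn : ¬ ancT (FibTree (1+1)) (Sum.inr PUnit.unit) (Sum.inl PUnit.unit) :=
          fun h => by cases reach_sink_n1 h
        simp only [Strategy.run]
        exact if_neg hn
  | (m+2) => by
      obtain ⟨sL, hLc, hLh⟩ := ub_fib (m+1)
      obtain ⟨sR, hRc, hRh⟩ := ub_fib m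
      show ∃ s' : Strategy (Pos (.node2 (FibTree (m+2)) (FibTree (m+1)))),
        (∀ f, s'.run (ancT (.node2 (FibTree (m+2)) (FibTree (m+1)))) f = f) ∧
          s'.height ≤ m + 2
      refine ⟨.node (Sum.inl (Sum.inl (sinkOf (FibTree (m+2)))))
          (smap (fun a => Sum.inl (Sum.inl a)) sL)
          (.node (Sum.inl (Sum.inr (sinkOf (FibTree (m+1)))))
            (smap (fun b => Sum.inl (Sum.inr b)) sR)
            (.leaf (Sum.inr PUnit.unit))), fun f => ?_, ?_⟩
      · rcases f with (a | b) | pu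
        · simp only [Strategy.run]
          rw [if_pos (lift_n2L (all_anc_sink (FibTree (m+2)) a))]
          exact (smap_run (fun a => (Sum.inl (Sum.inl a) : Pos (.node2 (FibTree (m+2)) (FibTree (m+1))))) (fun u v => anc_n2L_iff) sL a).trans
            (congrArg (fun a => (Sum.inl (Sum.inl a) : Pos (.node2 (FibTree (m+2)) (FibTree (m+1))))) (hLc a))
        · simp only [Strategy.run]
          rw [if_neg not_anc_n2RL]
          refine (if_pos (lift_n2R (all_anc_sink (FibTree (m+1)) b))).trans ?_
          exact (smap_run (fun b => (Sum.inl (Sum.inr b) : Pos (.node2 (FibTree (m+2)) (FibTree (m+1))))) (fun u v => anc_n2R_iff) sR b).trans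
            (congrArg (fun b => (Sum.inl (Sum.inr b) : Pos (.node2 (FibTree (m+2)) (FibTree (m+1))))) (hRc b))
        · cases pu
          simp only [Strategy.run]
          rw [if_neg (fun h => by cases reach_sink_n2 h)]
          exact if_neg (fun h => by cases reach_sink_n2 h)
      · have key : ∀ (W : Type) (q1 q2 w : W) (e1 : Pos (FibTree (m+2)) → W)
            (e2 : Pos (FibTree (m+1)) → W),
            (Strategy.node q1 (smap e1 sL) (.node q2 (smap e2 sR) (.leaf w))).height ≤ m + 2 := by
          intro W q1 q2 w e1 e2
          simp only [Strategy.height, smap_height]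
          omega
        exact key _ _ _ _ _ _

theorem fibtree_optimal (i : ℕ) (hi : 1 ≤ i) :
    (∃ s : Strategy (Pos (FibTree i)),
      (∀ f, s.run (fun u v => Relation.ReflTransGen (edgeOf (FibTree i)) u v) f = f) ∧
      s.height ≤ i - 1) ∧
    (∀ s : Strategy (Pos (FibTree i)),
      (∀ f, s.run (fun u v => Relation.ReflTransGen (edgeOf (FibTree i)) u v) f = f) →
      i - 1 ≤ s.height) := by
  constructor
  · -- upper bound
    obtain ⟨n, rfl⟩ : ∃ n, i = n + 1 := ⟨i - 1, by omega⟩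
    obtain ⟨s, hc, hh⟩ := ub_fib n
    exact ⟨s, hc, by simpa using hh⟩
  · -- lower bound
    intro s hc
    obtain ⟨n, rfl⟩ : ∃ n, i = n + 1 := ⟨i - 1, by omega⟩
    have h := rk_lower (anc := ancT (FibTree (n+1)))
      (fun _ _ _ h1 h2 => ancT_trans h1 h2)
      (fun _ _ _ h1 h2 => ancT_chain h1 h2)
      s Set.univ (fun f _ => hc f) n (sinkOf (FibTree (n+1))) (rk_fib n)
    simpa using h
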